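/- Fix an integer n ≥ 3 and define I_n(θ) = θ·log(1−θ) + n(θ + (1−θ)log(1−θ)) for θ ∈ (0,1). Then I_n has exactly one zero θ* in (0,1); moreover I_n(θ) > 0 for θ ∈ (0,θ*), I_n(θ) < 0 for θ ∈ (θ*,1), and θ* > (n−2)/(n−1). -/

import Mathlib

open Real Set

/-- Auxiliary function: `I n θ = (a - (a-1)θ) * hh a θ` where `a = n`. -/
noncomputable def hh (a θ : ℝ) : ℝ := Real.log (1 - θ) + a * θ / (a - (a - 1) * θ)

lemma hh_D_pos {a θ : ℝ} (ha : 1 ≤ a) (hθ : θ ≤ 1) : 0 < a - (a - 1) * θ := by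
  nlinarith

lemma hh_cont {a : ℝ} (ha : 1 ≤ a) : ContinuousOn (hh a) (Ico (0:ℝ) 1) := by
  apply ContinuousOn.add
  · apply ContinuousOn.log
    · exact (continuous_const.sub continuous_id).continuousOn
    · intro x hx
      have := hx.2
      simp only [mem_Ico] at hx
      nlinarith [hx.2]
  · apply ContinuousOn.div
    · exact (continuous_const.mul continuous_id).continuousOn
    · exact (continuous_const.sub (continuous_const.mul continuous_id)).continuousOn
    · intro x hx
      exact ne_of_gt (hh_D_pos ha hx.2.le)

lemma hh_hasDeriv {a θ : ℝ} (ha : 1 ≤ a) (h1 : θ < 1) :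
    HasDerivAt (hh a)
      (θ * (a * (a - 2) - (a - 1)^2 * θ) / ((a - (a - 1) * θ)^2 * (1 - θ))) θ := by
  have hD : (0:ℝ) < a - (a - 1) * θ := hh_D_pos ha h1.le
  have h1θ : (0:ℝ) < 1 - θ := by linarith
  have hlog := (Real.hasDerivAt_log (ne_of_gt h1θ)).comp θ
      ((hasDerivAt_id θ).const_sub 1)
  have hfrac := ((hasDerivAt_id θ).const_mul a).div
      (((hasDerivAt_id θ).const_mul (a - 1)).const_sub a) (ne_of_gt hD)
  have hsum := hlog.add hfrac
  refine hsum.congr_deriv ?_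
  have h1' : (1:ℝ) - θ ≠ 0 := h1θ.ne'
  have hD' := hD.ne'
  simp only [id]
  rw [inv_mul_eq_div, div_add_div _ _ h1' (pow_ne_zero 2 hD'), div_eq_div_iff (by positivity) (by positivity)]
  ring

lemma hh_mono {a : ℝ} (ha : 3 ≤ a) :
    StrictMonoOn (hh a) (Icc 0 (a * (a - 2) / (a - 1)^2)) := by
  have ha1 : (1:ℝ) ≤ a := by linarith
  have hsq : (0:ℝ) < (a - 1)^2 := by nlinarith
  have hc1 : a * (a - 2) / (a - 1)^2 < 1 := by
    rw [div_lt_one hsq]; nlinarith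
  apply strictMonoOn_of_deriv_pos (convex_Icc _ _)
  · exact (hh_cont ha1).mono (fun x hx => ⟨hx.1, lt_of_le_of_lt hx.2 hc1⟩)
  · intro x hx
    rw [interior_Icc] at hx
    have hx1 : x < 1 := hx.2.trans hc1
    rw [(hh_hasDeriv ha1 hx1).deriv]
    have hnum : x * (a - 1)^2 < a * (a - 2) := (lt_div_iff₀ hsq).mp hx.2
    apply div_pos
    · apply mul_pos hx.1; nlinarith
    · exact mul_pos (pow_pos (hh_D_pos ha1 hx1.le) 2) (by linarith)

lemma hh_anti {a : ℝ} (ha : 3 ≤ a) :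
    StrictAntiOn (hh a) (Ico (a * (a - 2) / (a - 1)^2) 1) := by
  have ha1 : (1:ℝ) ≤ a := by linarith
  have hsq : (0:ℝ) < (a - 1)^2 := by nlinarith
  have hc0 : 0 < a * (a - 2) / (a - 1)^2 := by
    apply div_pos (by nlinarith) hsq
  apply strictAntiOn_of_deriv_neg (convex_Ico _ _)
  · exact (hh_cont ha1).mono (fun x hx => ⟨hc0.le.trans hx.1, hx.2⟩)
  · intro x hx
    rw [interior_Ico] at hx
    rw [(hh_hasDeriv ha1 hx.2).deriv]
    have hnum : a * (a - 2) < x * (a - 1)^2 := (div_lt_iff₀ hsq).mp hx.1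
    apply div_neg_of_neg_of_pos
    · apply mul_neg_of_pos_of_neg (hc0.trans hx.1); nlinarith
    · exact mul_pos (pow_pos (hh_D_pos ha1 hx.2.le) 2) (by linarith [hx.2])

/-- `I_n(θ) = θ·log(1−θ) + n(θ + (1−θ)·log(1−θ))`. -/
noncomputable def I (n : ℕ) (θ : ℝ) : ℝ :=
  θ * Real.log (1 - θ) + n * (θ + (1 - θ) * Real.log (1 - θ))

lemma I_eq_hh (n : ℕ) (hn : 3 ≤ n) {θ : ℝ} (hθ : θ < 1) :
    I n θ = ((n:ℝ) - ((n:ℝ) - 1) * θ) * hh (n:ℝ) θ := by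
  have ha : (3:ℝ) ≤ (n:ℝ) := by exact_mod_cast hn
  have hD : (0:ℝ) < (n:ℝ) - ((n:ℝ) - 1) * θ := hh_D_pos (by linarith) hθ.le
  unfold I hh
  rw [mul_add _ (Real.log _), mul_div_cancel₀ _ hD.ne']
  ring

/-- for `n ≥ 3`, `I_n` has exactly one zero `θ*` in `(0,1)`;
`I_n > 0` on `(0,θ*)`, `I_n < 0` on `(θ*,1)`, and `θ* > (n−2)/(n−1)`. -/
theorem stmt4 (n : ℕ) (hn : 3 ≤ n) :
    ∃ θstar ∈ Set.Ioo (0:ℝ) 1,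
      I n θstar = 0 ∧
      (∀ θ ∈ Set.Ioo (0:ℝ) 1, I n θ = 0 → θ = θstar) ∧
      (∀ θ ∈ Set.Ioo (0:ℝ) θstar, 0 < I n θ) ∧
      (∀ θ ∈ Set.Ioo θstar (1:ℝ), I n θ < 0) ∧
      ((n:ℝ) - 2) / ((n:ℝ) - 1) < θstar := by
  set a : ℝ := (n:ℝ) with ha_def
  have ha : (3:ℝ) ≤ a := by rw [ha_def]; exact_mod_cast hn
  have ha1 : (1:ℝ) ≤ a := by linarith
  have hsq : (0:ℝ) < (a - 1)^2 := by nlinarith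
  set c : ℝ := a * (a - 2) / (a - 1)^2 with hc_def
  have hc0 : 0 < c := div_pos (by nlinarith) hsq
  have hc1 : c < 1 := by rw [hc_def, div_lt_one hsq]; nlinarith
  have hmono := hh_mono ha
  have hanti := hh_anti ha
  have h0 : hh a 0 = 0 := by simp [hh]
  have hcpos : 0 < hh a c := by
    have := hmono (left_mem_Icc.mpr hc0.le) (right_mem_Icc.mpr hc0.le) hc0
    rwa [h0] at this
  -- the point b where hh is negative
  set ε : ℝ := min (Real.exp (-(a + 1))) (1 / (2 * (a - 1)^2)) with hε_def
  have hε_pos : 0 < ε := lt_min (Real.exp_pos _) (by positivity)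
  have hε_small : ε < 1 / (a - 1)^2 := by
    have h2 : (1:ℝ) / (2 * (a - 1)^2) < 1 / (a - 1)^2 := by
      rw [div_lt_div_iff₀ (by nlinarith) hsq]; nlinarith
    exact lt_of_le_of_lt (min_le_right _ _) h2
  set b : ℝ := 1 - ε with hb_def
  have hb1 : b < 1 := by simp [hb_def]; linarith
  have h1c : 1 - c = 1 / (a - 1)^2 := by
    rw [hc_def]; rw [eq_div_iff hsq.ne', sub_mul, div_mul_cancel₀ _ hsq.ne']; ring
  have hcb : c < b := by
    have : ε < 1 - c := by rw [h1c]; exact hε_small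
    simp only [hb_def]; linarith
  have hb0 : 0 < b := by
    have : c < b := hcb; linarith [hc0]
  have hDb : (1:ℝ) ≤ a - (a - 1) * b := by nlinarith [hb1]
  have hhb_neg : hh a b < 0 := by
    have hlog : Real.log (1 - b) ≤ -(a + 1) := by
      have h1 : Real.log ε ≤ Real.log (Real.exp (-(a + 1))) :=
        Real.log_le_log hε_pos (min_le_left _ _)
      rw [Real.log_exp] at h1
      simpa [hb_def] using h1
    have hfrac : a * b / (a - (a - 1) * b) ≤ a := by
      have h1 : a * b / (a - (a - 1) * b) ≤ a * b := by
        apply div_le_self (by positivity) hDb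
      nlinarith
    have : hh a b ≤ -(a + 1) + a := add_le_add hlog hfrac
    linarith
  -- IVT
  have hcont : ContinuousOn (hh a) (Icc c b) :=
    (hh_cont ha1).mono (fun x hx => ⟨hc0.le.trans hx.1, lt_of_le_of_lt hx.2 hb1⟩)
  obtain ⟨θs, hθs_mem, hθs0⟩ :=
    intermediate_value_Icc' hcb.le hcont ⟨hhb_neg.le, hcpos.le⟩
  have hθs_ne_c : θs ≠ c := by
    intro h; rw [h] at hθs0; exact absurd hθs0 (ne_of_gt hcpos)
  have hcθs : c < θs := lt_of_le_of_ne hθs_mem.1 (Ne.symm hθs_ne_c)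
  have hθs1 : θs < 1 := lt_of_le_of_lt hθs_mem.2 hb1
  have hθs0' : 0 < θs := hc0.trans hcθs
  -- sign lemmas
  have hsign_pos : ∀ θ ∈ Ioo (0:ℝ) θs, 0 < hh a θ := by
    intro θ hθ
    rcases le_or_gt θ c with h | h
    · have := hmono (left_mem_Icc.mpr hc0.le) ⟨hθ.1.le, h⟩ hθ.1
      rwa [h0] at this
    · have := hanti ⟨h.le, by linarith [hθ.2]⟩ ⟨hcθs.le, hθs1⟩ hθ.2
      rw [hθs0] at this
      exact this
  have hsign_neg : ∀ θ ∈ Ioo θs (1:ℝ), hh a θ < 0 := by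
    intro θ hθ
    have := hanti ⟨hcθs.le, hθs1⟩ ⟨(hcθs.trans hθ.1).le, hθ.2⟩ hθ.1
    rwa [hθs0] at this
  -- transfer to I
  have hDpos : ∀ θ : ℝ, θ < 1 → 0 < a - (a - 1) * θ :=
    fun θ hθ => hh_D_pos ha1 hθ.le
  refine ⟨θs, ⟨hθs0', hθs1⟩, ?_, ?_, ?_, ?_, ?_⟩
  · rw [I_eq_hh n hn hθs1, hθs0, mul_zero]
  · intro θ hθ hI
    rw [I_eq_hh n hn hθ.2] at hI
    have hhθ : hh a θ = 0 := by
      rcases mul_eq_zero.mp hI with h | h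
      · exact absurd h (ne_of_gt (hDpos θ hθ.2))
      · exact h
    rcases lt_trichotomy θ θs with h | h | h
    · exact absurd hhθ (ne_of_gt (hsign_pos θ ⟨hθ.1, h⟩))
    · exact h
    · exact absurd hhθ (ne_of_lt (hsign_neg θ ⟨h, hθ.2⟩))
  · intro θ hθ
    have h1 : θ < 1 := hθ.2.trans hθs1
    rw [I_eq_hh n hn h1]
    exact mul_pos (hDpos θ h1) (hsign_pos θ hθ)
  · intro θ hθ
    rw [I_eq_hh n hn hθ.2]
    exact mul_neg_of_pos_of_neg (hDpos θ hθ.2) (hsign_neg θ hθ)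
  · have hpc : (a - 2) / (a - 1) < c := by
      rw [hc_def, div_lt_div_iff₀ (by linarith) hsq]
      nlinarith
    calc (a - 2) / (a - 1) < c := hpc
      _ < θs := hcθs
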